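/- Let q, Q ∈ ℂ with 0 < |q| < 1, and let α and β be partitions with |Q| < |q|^{α_1 + β_1}. Then the doubly indexed family (1 − Q q^{-β_i − α_j + i + j − 1})_{i,j ≥ 1} is multipliable and ∏_{i,j=1}^∞ (1 − Q q^{-β_i − α_j + i + j − 1}) = exp( − ∑_{k=1}^∞ (Q^k / k) · ( ∑_{i=1}^∞ q^{k(i − β_i)} ) · ( ∑_{j=1}^∞ q^{k(j − 1 − α_j)} ) ), all the series occurring on the right-hand side being absolutely convergent. -/

import Mathlib

open Complex

/-- Geometric-type summability for `r ^ e i` when `e i ≥ i + C`. -/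
lemma aux_summable_zpow {r : ℝ} (hr0 : 0 < r) (hr1 : r < 1) (e : ℕ → ℤ) (C : ℤ)
    (h : ∀ i : ℕ, (i : ℤ) + C ≤ e i) : Summable (fun i : ℕ => r ^ e i) := by
  refine Summable.of_nonneg_of_le (fun i => (zpow_pos hr0 _).le) (fun i => ?_)
    (((summable_geometric_of_lt_one hr0.le hr1)).mul_left (r ^ C))
  calc r ^ e i ≤ r ^ ((i : ℤ) + C) :=
        zpow_le_zpow_right_of_le_one₀ hr0 hr1.le (h i)
    _ = r ^ C * r ^ i := by
        rw [zpow_add₀ hr0.ne', zpow_natCast, mul_comm]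

lemma aux_summable_czpow {q : ℂ} (hq0 : 0 < ‖q‖) (hq1 : ‖q‖ < 1)
    (e : ℕ → ℤ) (C : ℤ) (h : ∀ i : ℕ, (i : ℤ) + C ≤ e i) :
    Summable (fun i : ℕ => q ^ e i) := by
  refine Summable.of_norm ?_
  simpa [norm_zpow] using aux_summable_zpow hq0 hq1 e C h

lemma aux_summable_czpow_norm {q : ℂ} (hq0 : 0 < ‖q‖) (hq1 : ‖q‖ < 1)
    (e : ℕ → ℤ) (C : ℤ) (h : ∀ i : ℕ, (i : ℤ) + C ≤ e i) :
    Summable (fun i : ℕ => ‖(q ^ e i : ℂ)‖) := by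
  simpa [norm_zpow] using aux_summable_zpow hq0 hq1 e C h

/-- Main analytic lemma: for a doubly-indexed family with geometric norm bound,
the product `∏ (1 - f ij)` equals `exp (-∑_k ∑_ij f ij ^ (k+1) / (k+1))`. -/
lemma aux_main {f : ℕ × ℕ → ℂ} {c r : ℝ} (hc0 : 0 ≤ c) (hc1 : c < 1)
    (hr0 : 0 ≤ r) (hr1 : r < 1)
    (hxb : ∀ ij : ℕ × ℕ, ‖f ij‖ ≤ c * r ^ (ij.1 + ij.2 + 1)) :
    Multipliable (fun ij : ℕ × ℕ => 1 - f ij) ∧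
    (∀ ij : ℕ × ℕ, Summable (fun k : ℕ => f ij ^ (k + 1) / ((k : ℂ) + 1))) ∧
    Summable (fun k : ℕ => ∑' ij : ℕ × ℕ, f ij ^ (k + 1) / ((k : ℂ) + 1)) ∧
    (∏' ij : ℕ × ℕ, (1 - f ij)) =
      Complex.exp (- ∑' k : ℕ, ∑' ij : ℕ × ℕ, f ij ^ (k + 1) / ((k : ℂ) + 1)) := by
  have hrpow_le_one : ∀ m : ℕ, r ^ m ≤ 1 := fun m => pow_le_one₀ hr0 hr1.le
  have hx1 : ∀ ij : ℕ × ℕ, ‖f ij‖ < 1 := by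
    intro ij
    refine lt_of_le_of_lt (hxb ij) (lt_of_le_of_lt ?_ hc1)
    exact mul_le_of_le_one_right hc0 (hrpow_le_one _)
  have h1f : ∀ ij : ℕ × ℕ, 1 - f ij ≠ 0 := by
    intro ij h
    rw [sub_eq_zero] at h
    have := hx1 ij
    rw [← h] at this
    simp at this
  set g : (ℕ × ℕ) × ℕ → ℂ := fun p => f p.1 ^ (p.2 + 1) / ((p.2 : ℂ) + 1) with hgdef
  have hgB : ∀ p : (ℕ × ℕ) × ℕ, ‖g p‖ ≤ r ^ (p.1.1 + p.1.2 + 1) * c ^ (p.2 + 1) := by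
    rintro ⟨⟨i, j⟩, k⟩
    have hd : (1:ℝ) ≤ ‖((k : ℂ) + 1)‖ := by
      have : ((k : ℂ) + 1) = ((k + 1 : ℕ) : ℂ) := by push_cast; ring
      rw [this, Complex.norm_natCast]
      exact_mod_cast Nat.succ_le_succ k.zero_le
    have h0 : ‖g ((i,j),k)‖ ≤ ‖f (i,j)‖ ^ (k + 1) := by
      rw [hgdef]
      simp only [norm_div, norm_pow]
      exact div_le_self (by positivity) hd
    refine h0.trans ?_
    calc ‖f (i,j)‖ ^ (k+1) ≤ (c * r ^ (i + j + 1)) ^ (k+1) :=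
          pow_le_pow_left₀ (norm_nonneg _) (hxb _) _
      _ = c ^ (k+1) * (r ^ (i + j + 1)) ^ (k+1) := mul_pow _ _ _
      _ ≤ c ^ (k+1) * r ^ (i + j + 1) := by
          refine mul_le_mul_of_nonneg_left ?_ (by positivity)
          exact (pow_le_pow_of_le_one (by positivity) (hrpow_le_one _)
            (Nat.le_add_left 1 k)).trans_eq (pow_one _)
      _ = r ^ (i + j + 1) * c ^ (k+1) := mul_comm _ _
  have hF : Summable (fun ij : ℕ × ℕ => r ^ (ij.1 + ij.2 + 1)) := by
    have := Summable.mul_of_nonneg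
      (f := fun i : ℕ => r ^ (i + 1)) (g := fun j : ℕ => r ^ j)
      ((summable_geometric_of_lt_one hr0 hr1).mul_left r |>.congr
        (fun i => by rw [pow_succ]; ring))
      (summable_geometric_of_lt_one hr0 hr1)
      (fun i => by positivity) (fun j => by positivity)
    refine this.congr (fun ij => ?_)
    show r ^ (ij.1 + 1) * r ^ ij.2 = _
    rw [← pow_add]
    congr 1
    omega
  have hG : Summable (fun k : ℕ => c ^ (k + 1)) :=
    ((summable_geometric_of_lt_one hc0 hc1).mul_left c).congr
      (fun k => by rw [pow_succ]; ring)
  have hFpos : ∀ ij : ℕ × ℕ, 0 ≤ r ^ (ij.1 + ij.2 + 1) := fun ij => by positivity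
  have hGpos : ∀ k : ℕ, 0 ≤ c ^ (k + 1) := fun k => by positivity
  have hBsum : Summable (fun p : (ℕ × ℕ) × ℕ => r ^ (p.1.1 + p.1.2 + 1) * c ^ (p.2 + 1)) :=
    Summable.mul_of_nonneg (f := fun ij : ℕ × ℕ => r ^ (ij.1 + ij.2 + 1))
      (g := fun k : ℕ => c ^ (k + 1)) hF hG hFpos hGpos
  have hgS : Summable g := Summable.of_norm_bounded hBsum hgB
  have hgfib : ∀ ij : ℕ × ℕ, Summable (fun k : ℕ => g (ij, k)) :=
    fun ij => hgS.prod_factor ij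
  -- Taylor series of log per (i,j)
  have hlog : ∀ ij : ℕ × ℕ, HasSum (fun k : ℕ => g (ij, k)) (-Complex.log (1 - f ij)) := by
    intro ij
    have h := Complex.hasSum_taylorSeries_neg_log (z := f ij) (hx1 ij)
    have h2 := (hasSum_nat_add_iff' (f := fun n : ℕ => f ij ^ n / (n : ℂ)) 1).mpr h
    simp only [Finset.range_one, Finset.sum_singleton, Nat.cast_zero, pow_zero,
      div_zero, sub_zero] at h2
    refine h2.congr_fun (fun k => ?_)
    rw [hgdef]
    push_cast
    ring_nf
  have hloge : ∀ ij : ℕ × ℕ, Complex.log (1 - f ij) = -∑' k : ℕ, g (ij, k) := by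
    intro ij
    rw [(hlog ij).tsum_eq, neg_neg]
  have hgnorm : ∀ ij : ℕ × ℕ, Summable (fun k : ℕ => ‖g (ij, k)‖) := by
    intro ij
    have hb : Summable (fun k : ℕ => r ^ (ij.1 + ij.2 + 1) * c ^ (k + 1)) :=
      hG.mul_left (r ^ (ij.1 + ij.2 + 1))
    exact Summable.of_nonneg_of_le (fun k => norm_nonneg _) (fun k => hgB (ij, k)) hb
  have hlogS : Summable (fun ij : ℕ × ℕ => Complex.log (1 - f ij)) := by
    refine Summable.of_norm_bounded
      (hF.mul_right (∑' k : ℕ, c ^ (k + 1))) (fun ij => ?_)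
    rw [hloge ij, norm_neg]
    refine (norm_tsum_le_tsum_norm (hgnorm ij)).trans ?_
    have hb : Summable (fun k : ℕ => r ^ (ij.1 + ij.2 + 1) * c ^ (k + 1)) :=
      hG.mul_left (r ^ (ij.1 + ij.2 + 1))
    show _ ≤ r ^ (ij.1 + ij.2 + 1) * ∑' k : ℕ, c ^ (k + 1)
    have h2 : ∑' k : ℕ, r ^ (ij.1 + ij.2 + 1) * c ^ (k + 1)
        = r ^ (ij.1 + ij.2 + 1) * ∑' k : ℕ, c ^ (k + 1) := tsum_mul_left
    exact (Summable.tsum_le_tsum (fun k => hgB (ij, k)) (hgnorm ij) hb).trans_eq h2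
  have hprod : HasProd (fun ij : ℕ × ℕ => 1 - f ij)
      (Complex.exp (∑' ij : ℕ × ℕ, Complex.log (1 - f ij))) := by
    have h := hlogS.hasSum.cexp
    have key : (Complex.exp ∘ fun ij : ℕ × ℕ => Complex.log (1 - f ij))
        = fun ij : ℕ × ℕ => 1 - f ij :=
      funext fun ij => Complex.exp_log (h1f ij)
    rwa [key] at h
  -- Fubini
  have hgswap : Summable (fun p : ℕ × (ℕ × ℕ) => g (p.2, p.1)) := by
    have h := hgS.prod_symm
    exact h.congr (fun p => rfl)
  have hsum_k : Summable (fun k : ℕ => ∑' ij : ℕ × ℕ, g (ij, k)) := by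
    have h := hgswap.prod
    exact h.congr (fun k => rfl)
  have hswapfib : ∀ k : ℕ, Summable (fun ij : ℕ × ℕ => g (ij, k)) :=
    fun k => hgswap.prod_factor k
  have hfub : ∑' ij : ℕ × ℕ, ∑' k : ℕ, g (ij, k) = ∑' k : ℕ, ∑' ij : ℕ × ℕ, g (ij, k) := by
    have e1 : ∑' p : (ℕ × ℕ) × ℕ, g p = ∑' ij : ℕ × ℕ, ∑' k : ℕ, g (ij, k) :=
      Summable.tsum_prod' hgS hgfib
    have e2 : ∑' p : ℕ × (ℕ × ℕ), g (p.2, p.1) = ∑' k : ℕ, ∑' ij : ℕ × ℕ, g (ij, k) :=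
      Summable.tsum_prod' hgswap hswapfib
    have e3 : ∑' p : ℕ × (ℕ × ℕ), g (p.2, p.1) = ∑' p : (ℕ × ℕ) × ℕ, g p :=
      (Equiv.prodComm ℕ (ℕ × ℕ)).tsum_eq g
    rw [← e1, ← e3, e2]
  have hlogsum : ∑' ij : ℕ × ℕ, Complex.log (1 - f ij)
      = - ∑' k : ℕ, ∑' ij : ℕ × ℕ, g (ij, k) := by
    rw [← hfub, ← tsum_neg]
    exact tsum_congr hloge
  refine ⟨hprod.multipliable, hgfib, hsum_k, ?_⟩
  rw [hprod.tprod_eq, hlogsum]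

/-- Partitions `α, β` are encoded as antitone `ℕ → ℕ` with finite support,
with `α i = α_{i+1}` (0-based index).  The (1-based) double product
`∏_{i,j≥1} (1 − Q q^{−β_i − α_j + i + j − 1})` becomes, with 0-based indices,
`∏' (i,j) : ℕ × ℕ, (1 − Q q^{−β_i − α_j + i + j + 1})`, and the exponents
`k(i − β_i)` (for `i ≥ 1`) and `k(j − 1 − α_j)` (for `j ≥ 1`) become
`k((i+1) − β_i)` and `k(j − α_j)` for 0-based `i, j` and `k ≥ 1`.

STATEMENT 3: under `0 < |q| < 1` and `|Q| < |q|^{α_1 + β_1}`, the double family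
is multipliable, all series on the right-hand side are (absolutely) summable,
and the product equals
`exp(−∑_{k≥1} (Q^k/k)(∑_{i≥1} q^{k(i−β_i)})(∑_{j≥1} q^{k(j−1−α_j)}))`. -/
theorem closed_topological_vertex_double_product_exp
    (q Q : ℂ) (hq0 : 0 < ‖q‖) (hq1 : ‖q‖ < 1)
    (α β : ℕ → ℕ) (hα : Antitone α) (hβ : Antitone β)
    (hαfin : ∃ N, ∀ i, N ≤ i → α i = 0) (hβfin : ∃ N, ∀ i, N ≤ i → β i = 0)
    (hQ : ‖Q‖ < ‖q‖ ^ (α 0 + β 0)) :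
    Multipliable (fun ij : ℕ × ℕ =>
      1 - Q * q ^ (-(β ij.1 : ℤ) - (α ij.2 : ℤ) + ij.1 + ij.2 + 1)) ∧
    (∀ k : ℕ, Summable (fun i : ℕ => q ^ (((k : ℤ) + 1) * (((i : ℤ) + 1) - (β i : ℤ))))) ∧
    (∀ k : ℕ, Summable (fun j : ℕ => q ^ (((k : ℤ) + 1) * ((j : ℤ) - (α j : ℤ))))) ∧
    Summable (fun k : ℕ => (Q ^ (k + 1) / ((k : ℂ) + 1)) *
      (∑' i : ℕ, q ^ (((k : ℤ) + 1) * (((i : ℤ) + 1) - (β i : ℤ)))) *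
      (∑' j : ℕ, q ^ (((k : ℤ) + 1) * ((j : ℤ) - (α j : ℤ))))) ∧
    (∏' ij : ℕ × ℕ, (1 - Q * q ^ (-(β ij.1 : ℤ) - (α ij.2 : ℤ) + ij.1 + ij.2 + 1))) =
      Complex.exp (- ∑' k : ℕ, (Q ^ (k + 1) / ((k : ℂ) + 1)) *
        (∑' i : ℕ, q ^ (((k : ℤ) + 1) * (((i : ℤ) + 1) - (β i : ℤ)))) *
        (∑' j : ℕ, q ^ (((k : ℤ) + 1) * ((j : ℤ) - (α j : ℤ))))) := by
  have hqne : q ≠ 0 := by intro h; simp [h] at hq0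
  have hrn : (0:ℝ) < ‖q‖ ^ (α 0 + β 0) := pow_pos hq0 _
  have hc0 : 0 ≤ ‖Q‖ / ‖q‖ ^ (α 0 + β 0) :=
    div_nonneg (norm_nonneg _) hrn.le
  have hc1 : ‖Q‖ / ‖q‖ ^ (α 0 + β 0) < 1 := (div_lt_one hrn).mpr hQ
  -- norm bound
  have hxb : ∀ ij : ℕ × ℕ, ‖Q * q ^ (-(β ij.1 : ℤ) - (α ij.2 : ℤ) + ij.1 + ij.2 + 1)‖ ≤
      (‖Q‖ / ‖q‖ ^ (α 0 + β 0)) * ‖q‖ ^ (ij.1 + ij.2 + 1) := by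
    rintro ⟨i, j⟩
    have h1 : β i ≤ β 0 := hβ (Nat.zero_le i)
    have h2 : α j ≤ α 0 := hα (Nat.zero_le j)
    have he : ((i + j + 1 : ℕ) : ℤ) - (α 0 + β 0 : ℕ) ≤
        -(β i : ℤ) - (α j : ℤ) + i + j + 1 := by push_cast; omega
    calc ‖Q * q ^ (-(β i : ℤ) - (α j : ℤ) + i + j + 1)‖
        = ‖Q‖ * ‖q‖ ^ (-(β i : ℤ) - (α j : ℤ) + i + j + 1) := by
          rw [norm_mul, norm_zpow]
      _ ≤ ‖Q‖ * ‖q‖ ^ (((i + j + 1 : ℕ) : ℤ) - (α 0 + β 0 : ℕ)) :=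
          mul_le_mul_of_nonneg_left
            (zpow_le_zpow_right_of_le_one₀ hq0 hq1.le he) (norm_nonneg Q)
      _ = (‖Q‖ / ‖q‖ ^ (α 0 + β 0)) * ‖q‖ ^ (i + j + 1) := by
          rw [zpow_sub₀ hq0.ne', zpow_natCast, zpow_natCast]
          ring
  obtain ⟨h1, _h2, h3, h4⟩ := aux_main hc0 hc1 (norm_nonneg q) hq1 hxb
  -- summability of the single series
  have claim2 : ∀ k : ℕ, Summable
      (fun i : ℕ => q ^ (((k : ℤ) + 1) * (((i : ℤ) + 1) - (β i : ℤ)))) := by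
    intro k
    refine aux_summable_czpow hq0 hq1 _ (((k : ℤ) + 1) * (1 - (β 0 : ℤ))) (fun i => ?_)
    have hb : (β i : ℤ) ≤ (β 0 : ℤ) := by exact_mod_cast hβ (Nat.zero_le i)
    have p1 : 0 ≤ ((k : ℤ) + 1 - 1) * (i : ℤ) :=
      mul_nonneg (by omega) (Int.ofNat_nonneg i)
    have p2 : 0 ≤ ((k : ℤ) + 1) * ((β 0 : ℤ) - (β i : ℤ)) :=
      mul_nonneg (by omega) (by omega)
    nlinarith [p1, p2]
  have claim2n : ∀ k : ℕ, Summable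
      (fun i : ℕ => ‖(q ^ (((k : ℤ) + 1) * (((i : ℤ) + 1) - (β i : ℤ))) : ℂ)‖) := by
    intro k
    refine aux_summable_czpow_norm hq0 hq1 _ (((k : ℤ) + 1) * (1 - (β 0 : ℤ))) (fun i => ?_)
    have hb : (β i : ℤ) ≤ (β 0 : ℤ) := by exact_mod_cast hβ (Nat.zero_le i)
    have p1 : 0 ≤ ((k : ℤ) + 1 - 1) * (i : ℤ) :=
      mul_nonneg (by omega) (Int.ofNat_nonneg i)
    have p2 : 0 ≤ ((k : ℤ) + 1) * ((β 0 : ℤ) - (β i : ℤ)) :=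
      mul_nonneg (by omega) (by omega)
    nlinarith [p1, p2]
  have claim3 : ∀ k : ℕ, Summable
      (fun j : ℕ => q ^ (((k : ℤ) + 1) * ((j : ℤ) - (α j : ℤ)))) := by
    intro k
    refine aux_summable_czpow hq0 hq1 _ (-(((k : ℤ) + 1) * (α 0 : ℤ))) (fun j => ?_)
    have hb : (α j : ℤ) ≤ (α 0 : ℤ) := by exact_mod_cast hα (Nat.zero_le j)
    have p1 : 0 ≤ ((k : ℤ) + 1 - 1) * (j : ℤ) :=
      mul_nonneg (by omega) (Int.ofNat_nonneg j)
    have p2 : 0 ≤ ((k : ℤ) + 1) * ((α 0 : ℤ) - (α j : ℤ)) :=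
      mul_nonneg (by omega) (by omega)
    nlinarith [p1, p2]
  have claim3n : ∀ k : ℕ, Summable
      (fun j : ℕ => ‖(q ^ (((k : ℤ) + 1) * ((j : ℤ) - (α j : ℤ))) : ℂ)‖) := by
    intro k
    refine aux_summable_czpow_norm hq0 hq1 _ (-(((k : ℤ) + 1) * (α 0 : ℤ))) (fun j => ?_)
    have hb : (α j : ℤ) ≤ (α 0 : ℤ) := by exact_mod_cast hα (Nat.zero_le j)
    have p1 : 0 ≤ ((k : ℤ) + 1 - 1) * (j : ℤ) :=
      mul_nonneg (by omega) (Int.ofNat_nonneg j)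
    have p2 : 0 ≤ ((k : ℤ) + 1) * ((α 0 : ℤ) - (α j : ℤ)) :=
      mul_nonneg (by omega) (by omega)
    nlinarith [p1, p2]
  -- the key per-k identity
  have key : ∀ k : ℕ,
      (∑' ij : ℕ × ℕ, (Q * q ^ (-(β ij.1 : ℤ) - (α ij.2 : ℤ) + ij.1 + ij.2 + 1)) ^ (k + 1)
        / ((k : ℂ) + 1)) =
      (Q ^ (k + 1) / ((k : ℂ) + 1)) *
        (∑' i : ℕ, q ^ (((k : ℤ) + 1) * (((i : ℤ) + 1) - (β i : ℤ)))) *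
        (∑' j : ℕ, q ^ (((k : ℤ) + 1) * ((j : ℤ) - (α j : ℤ)))) := by
    intro k
    have hpz : ∀ e : ℤ, (q ^ e) ^ (k + 1) = q ^ (((k : ℤ) + 1) * e) := by
      intro e
      rw [← zpow_natCast (q ^ e), ← zpow_mul]
      congr 1
      push_cast
      ring
    have hterm : ∀ ij : ℕ × ℕ,
        (Q * q ^ (-(β ij.1 : ℤ) - (α ij.2 : ℤ) + ij.1 + ij.2 + 1)) ^ (k + 1) / ((k : ℂ) + 1)
        = (Q ^ (k + 1) / ((k : ℂ) + 1)) *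
          (q ^ (((k : ℤ) + 1) * (((ij.1 : ℤ) + 1) - (β ij.1 : ℤ))) *
           q ^ (((k : ℤ) + 1) * ((ij.2 : ℤ) - (α ij.2 : ℤ)))) := by
      rintro ⟨i, j⟩
      have hsplit : Q * q ^ (-(β i : ℤ) - (α j : ℤ) + i + j + 1)
          = Q * (q ^ (((i : ℤ) + 1) - (β i : ℤ)) * q ^ ((j : ℤ) - (α j : ℤ))) := by
        rw [← zpow_add₀ hqne]
        congr 1
        push_cast
        ring
      rw [hsplit, mul_pow, mul_pow, hpz, hpz]
      ring
    have hmul : (∑' i : ℕ, q ^ (((k : ℤ) + 1) * (((i : ℤ) + 1) - (β i : ℤ)))) *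
        (∑' j : ℕ, q ^ (((k : ℤ) + 1) * ((j : ℤ) - (α j : ℤ))))
        = ∑' ij : ℕ × ℕ, q ^ (((k : ℤ) + 1) * (((ij.1 : ℤ) + 1) - (β ij.1 : ℤ))) *
            q ^ (((k : ℤ) + 1) * ((ij.2 : ℤ) - (α ij.2 : ℤ))) :=
      tsum_mul_tsum_of_summable_norm
        (f := fun i : ℕ => q ^ (((k : ℤ) + 1) * (((i : ℤ) + 1) - (β i : ℤ))))
        (g := fun j : ℕ => q ^ (((k : ℤ) + 1) * ((j : ℤ) - (α j : ℤ))))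
        (claim2n k) (claim3n k)
    calc (∑' ij : ℕ × ℕ, (Q * q ^ (-(β ij.1 : ℤ) - (α ij.2 : ℤ) + ij.1 + ij.2 + 1)) ^ (k + 1)
          / ((k : ℂ) + 1))
        = ∑' ij : ℕ × ℕ, (Q ^ (k + 1) / ((k : ℂ) + 1)) *
            (q ^ (((k : ℤ) + 1) * (((ij.1 : ℤ) + 1) - (β ij.1 : ℤ))) *
             q ^ (((k : ℤ) + 1) * ((ij.2 : ℤ) - (α ij.2 : ℤ)))) := tsum_congr hterm
      _ = (Q ^ (k + 1) / ((k : ℂ) + 1)) *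
            ∑' ij : ℕ × ℕ, q ^ (((k : ℤ) + 1) * (((ij.1 : ℤ) + 1) - (β ij.1 : ℤ))) *
              q ^ (((k : ℤ) + 1) * ((ij.2 : ℤ) - (α ij.2 : ℤ))) := tsum_mul_left
      _ = _ := by rw [← hmul]; ring
  refine ⟨h1, claim2, claim3, h3.congr key, ?_⟩
  rw [h4, tsum_congr key]
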